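/- Let G and H be groups with commuting right G-action and left H-action on a set X, fix α ∈ X, and set G₀ = {g : α·g = α}, G₁ = {g : ∃ h ∈ H, α·g = h·α}, H₀ = {h : h·α = α}, H₁ = {h : ∃ g ∈ G, h·α = α·g}. Let K be a subgroup of G₁ containing G₀, and define L = {h ∈ H : h·(α·K) = α·K} = {h ∈ H : ∃ g ∈ K, h·α = α·g}. Then L is a subgroup of H₁, H₀ is a normal subgroup of L, and L/H₀ ≅ K/G₀ as groups. -/

import Mathlib

open MulOpposite

/-- For an `(H,G)`-biset `X` with fixed point `α`, and an intermediate subgroup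
`G₀ ≤ K ≤ G₁`, the set `L = {h | ∃ g ∈ K, h·α = α·g}` is a subgroup of `H` with
`H₀ ≤ L ≤ H₁`, `H₀` is normal in `L`, and `L/H₀ ≅ K/G₀` as groups. -/
theorem biset_intermediate_stabilizer_iso
    {G H X : Type} [Group G] [Group H] [MulAction Gᵐᵒᵖ X] [MulAction H X]
    [SMulCommClass H Gᵐᵒᵖ X] (α : X)
    (G₀ G₁ : Subgroup G) (H₀ H₁ : Subgroup H)
    (hG₀ : (G₀ : Set G) = {g : G | op g • α = α})
    (hG₁ : (G₁ : Set G) = {g : G | ∃ h : H, op g • α = h • α})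
    (hH₀ : (H₀ : Set H) = {h : H | h • α = α})
    (hH₁ : (H₁ : Set H) = {h : H | ∃ g : G, h • α = op g • α})
    (K : Subgroup G) (hG₀K : G₀ ≤ K) (hKG₁ : K ≤ G₁)
    [(G₀.subgroupOf K).Normal] :
    ∃ L : Subgroup H,
      ((L : Set H) = {h : H | ∃ g ∈ K, h • α = op g • α}) ∧
      L ≤ H₁ ∧ H₀ ≤ L ∧
      ∃ hn : (H₀.subgroupOf L).Normal,
        letI := hn
        Nonempty ((L ⧸ H₀.subgroupOf L) ≃* (K ⧸ G₀.subgroupOf K)) := by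
  classical
  set N := G₀.subgroupOf K with hNdef
  -- the subgroup L
  refine ⟨{ carrier := {h : H | ∃ g ∈ K, h • α = op g • α}
            one_mem' := ⟨1, one_mem K, by simp⟩
            mul_mem' := ?_
            inv_mem' := ?_ }, rfl, ?_, ?_, ?_⟩
  · rintro a b ⟨g₁, hg₁, h1⟩ ⟨g₂, hg₂, h2⟩
    refine ⟨g₁ * g₂, mul_mem hg₁ hg₂, ?_⟩
    rw [mul_smul, h2, smul_comm, h1, ← mul_smul, ← op_mul]
  · rintro a ⟨g, hg, h1⟩
    refine ⟨g⁻¹, inv_mem hg, ?_⟩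
    have : a • (op g⁻¹ • α) = α := by
      rw [smul_comm, h1, ← mul_smul, ← op_mul, mul_inv_cancel, op_one, one_smul]
    rw [inv_smul_eq_iff]; exact this.symm
  · -- L ≤ H₁
    rintro h ⟨g, hg, heq⟩
    rw [← SetLike.mem_coe, hH₁]
    exact ⟨g, heq⟩
  · -- H₀ ≤ L
    intro h hh
    rw [← SetLike.mem_coe, hH₀] at hh
    exact ⟨1, one_mem K, by simpa using hh⟩
  · -- the isomorphism
    set L : Subgroup H :=
      { carrier := {h : H | ∃ g ∈ K, h • α = op g • α}
        one_mem' := ⟨1, one_mem K, by simp⟩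
        mul_mem' := by
          rintro a b ⟨g₁, hg₁, h1⟩ ⟨g₂, hg₂, h2⟩
          refine ⟨g₁ * g₂, mul_mem hg₁ hg₂, ?_⟩
          rw [mul_smul, h2, smul_comm, h1, ← mul_smul, ← op_mul]
        inv_mem' := by
          rintro a ⟨g, hg, h1⟩
          refine ⟨g⁻¹, inv_mem hg, ?_⟩
          have : a • (op g⁻¹ • α) = α := by
            rw [smul_comm, h1, ← mul_smul, ← op_mul, mul_inv_cancel, op_one, one_smul]
          rw [inv_smul_eq_iff]; exact this.symm } with hLdef
    have memL : ∀ h : H, h ∈ L ↔ ∃ g ∈ K, h • α = op g • α := fun h => Iff.rfl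
    -- auxiliary: witness for each element of L
    have wit : ∀ h : L, ∃ g : K, (h : H) • α = op (g : G) • α := by
      rintro ⟨h, g, hg, heq⟩
      exact ⟨⟨g, hg⟩, heq⟩
    choose w hw using wit
    -- coherence: any two witnesses give the same coset mod N
    have agree : ∀ (h : L) (g : K), (h : H) • α = op (g : G) • α →
        (QuotientGroup.mk (w h) : K ⧸ N) = QuotientGroup.mk g := by
      intro h g heq
      rw [QuotientGroup.eq]
      have h1 : op ((g : G) * (w h : G)⁻¹) • α = α := by
        rw [op_mul, mul_smul]
        have : op (g : G) • α = op (w h : G) • α := heq ▸ (hw h)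
        rw [this, ← mul_smul, ← op_mul, mul_inv_cancel, op_one, one_smul]
      have h2 : (g * (w h)⁻¹ : K) ∈ N := by
        rw [hNdef, Subgroup.mem_subgroupOf]
        rw [← SetLike.mem_coe, hG₀]
        exact h1
      have h3 := Subgroup.Normal.conj_mem ‹N.Normal› _ h2 (w h)⁻¹
      simpa [mul_assoc] using h3
    -- the homomorphism L →* K ⧸ N
    set φ : L →* K ⧸ N := MonoidHom.mk' (fun h => QuotientGroup.mk (w h)) (by
      intro a b
      have heq : ((a * b : L) : H) • α = op ((w a : G) * (w b : G)) • α := by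
        rw [op_mul, mul_smul]
        show ((a : H) * (b : H)) • α = _
        rw [mul_smul, hw b, smul_comm, hw a]
      have := agree (a * b) (w a * w b) heq
      simpa using this) with hφdef
    have hφ : ∀ h : L, φ h = QuotientGroup.mk (w h) := fun _ => rfl
    -- surjectivity
    have hsurj : Function.Surjective φ := by
      intro q
      obtain ⟨g, rfl⟩ := QuotientGroup.mk_surjective q
      have hg1 : (g : G) ∈ G₁ := hKG₁ g.2
      rw [← SetLike.mem_coe, hG₁] at hg1
      obtain ⟨h, heq⟩ := hg1
      have hhL : h ∈ L := ⟨g, g.2, heq.symm⟩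
      exact ⟨⟨h, hhL⟩, agree ⟨h, hhL⟩ g heq.symm⟩
    -- kernel
    have hker : H₀.subgroupOf L = φ.ker := by
      ext h
      rw [Subgroup.mem_subgroupOf, MonoidHom.mem_ker, hφ]
      constructor
      · intro hh
        rw [← SetLike.mem_coe, hH₀] at hh
        have : (h : H) • α = op ((1 : K) : G) • α := by simpa using hh
        have := agree h 1 this
        simpa using this
      · intro hh
        rw [QuotientGroup.eq_one_iff, hNdef, Subgroup.mem_subgroupOf,
          ← SetLike.mem_coe, hG₀] at hh
        rw [← SetLike.mem_coe, hH₀]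
        show (h : H) • α = α
        rw [hw h]
        exact hh
    have hn : (H₀.subgroupOf L).Normal := hker ▸ φ.normal_ker
    refine ⟨hn, ⟨?_⟩⟩
    exact (QuotientGroup.quotientMulEquivOfEq hker).trans
      (QuotientGroup.quotientKerEquivOfSurjective φ hsurj)
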